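/- Let (G,H) be a compact Friedrichs module with Gelfand triplet G ⊂ H ⊂ G*, and let A and B be closed densely defined operators in H such that ρ(A) ∩ ρ(B) ≠ ∅, D(A) is a dense subspace of G, D(A*) ⊆ G, D(B) ⊆ G, and A, B extend to continuous operators Ã, B̃ ∈ B(G,G*). Fix z ∈ ρ(A) ∩ ρ(B) and let R_z : G* → H be the unique continuous extension of (A−z)⁻¹. Assume there exist a Banach module (K, M(K)) and operators S ∈ B(K,G*) and T ∈ B₀ˡ(G,K) such that B̃ − Ã = S∘T and such that R_z∘S ∈ B(K,H) is left decay preserving (H carrying its Hilbert module structure). Then (A−z)⁻¹ − (B−z)⁻¹ is a compact operator on H, i.e. B is a compact perturbation of A. -/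

import Mathlib

open ContinuousLinearMap

noncomputable section

/-- The space of continuous antilinear forms on `G` (the "adjoint space" `G*`). -/
abbrev AntiDual (G : Type*) [NormedAddCommGroup G] [NormedSpace ℂ G] : Type _ :=
  G →SL[starRingEnd ℂ] ℂ

/-- Given a continuous embedding `e : G → H` of a normed space into a Hilbert space,
the canonical map `H → G*`, `v ↦ (u ↦ ⟪e u, v⟫)`. -/
def toAntiDual {G H : Type*} [NormedAddCommGroup G] [NormedSpace ℂ G]
    [NormedAddCommGroup H] [InnerProductSpace ℂ H] (e : G →L[ℂ] H) :
    H →L[ℂ] AntiDual G :=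
  LinearMap.mkContinuous
    { toFun := fun v => ((innerSL ℂ).flip v).comp e
      map_add' := fun v w => by ext u; simp
      map_smul' := fun c v => by ext u; simp }
    ‖e‖ (fun v => by
      have hv : ‖(innerSL ℂ).flip v‖ ≤ ‖v‖ :=
        opNorm_le_bound _ (norm_nonneg v)
          (fun u => by simpa [mul_comm] using norm_inner_le_norm (𝕜 := ℂ) u v)
      calc ‖((innerSL ℂ).flip v).comp e‖ ≤ ‖(innerSL ℂ).flip v‖ * ‖e‖ := opNorm_comp_le _ _
      _ ≤ ‖v‖ * ‖e‖ := by gcongr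
      _ = ‖e‖ * ‖v‖ := mul_comm _ _)

/-- Precomposition with `D : G →L E`, as a map `E* →L G*`; this is the adjoint `D*`. -/
def precompAntiDual {G E : Type*} [NormedAddCommGroup G] [NormedSpace ℂ G]
    [NormedAddCommGroup E] [NormedSpace ℂ E] (D : G →L[ℂ] E) :
    AntiDual E →L[ℂ] AntiDual G :=
  LinearMap.mkContinuous
    { toFun := fun w => w.comp D
      map_add' := fun w₁ w₂ => by ext u; simp
      map_smul' := fun c w => by ext u; simp }
    ‖D‖ (fun w => by
      calc ‖w.comp D‖ ≤ ‖w‖ * ‖D‖ := opNorm_comp_le _ _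
      _ = ‖D‖ * ‖w‖ := mul_comm _ _)

/-- Auxiliary: the antilinear form `u ↦ conj ⟨v, a u⟩`. -/
def adjointFormAux {E : Type*} [NormedAddCommGroup E] [NormedSpace ℂ E]
    (a : E →L[ℂ] AntiDual E) (v : E) : AntiDual E :=
  LinearMap.mkContinuous
    { toFun := fun u => starRingEnd ℂ (a u v)
      map_add' := fun u₁ u₂ => by simp
      map_smul' := fun c u => by simp }
    (‖a‖ * ‖v‖) (fun u => by
      simp only [LinearMap.coe_mk, AddHom.coe_mk]
      calc ‖starRingEnd ℂ (a u v)‖ = ‖a u v‖ := by simp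
      _ ≤ ‖a u‖ * ‖v‖ := (a u).le_opNorm v
      _ ≤ (‖a‖ * ‖u‖) * ‖v‖ := by gcongr; exact a.le_opNorm u
      _ = ‖a‖ * ‖v‖ * ‖u‖ := by ring)

theorem adjointFormAux_norm_le {E : Type*} [NormedAddCommGroup E] [NormedSpace ℂ E]
    (a : E →L[ℂ] AntiDual E) (v : E) : ‖adjointFormAux a v‖ ≤ ‖a‖ * ‖v‖ :=
  LinearMap.mkContinuous_norm_le _ (mul_nonneg (norm_nonneg a) (norm_nonneg v)) _

@[simp] theorem adjointFormAux_apply {E : Type*} [NormedAddCommGroup E] [NormedSpace ℂ E]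
    (a : E →L[ℂ] AntiDual E) (v u : E) :
    adjointFormAux a v u = starRingEnd ℂ (a u v) := rfl

/-- The adjoint form `a* ∈ B(E,E*)` of `a ∈ B(E,E*)`: `⟨u, a* v⟩ = conj ⟨v, a u⟩`. -/
def adjointForm {E : Type*} [NormedAddCommGroup E] [NormedSpace ℂ E]
    (a : E →L[ℂ] AntiDual E) : E →L[ℂ] AntiDual E :=
  LinearMap.mkContinuous
    { toFun := fun v => adjointFormAux a v
      map_add' := fun v w => by ext u; simp
      map_smul' := fun c v => by ext u; simp }
    ‖a‖ (fun v => adjointFormAux_norm_le a v)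


variable {H K : Type*}

/-- `M` is the multiplier algebra of a Banach module structure on `H`: a non-degenerate
norm-closed subalgebra of `B(H)` possessing a bounded approximate unit. -/
structure IsBanachModule (H : Type*) [NormedAddCommGroup H] [NormedSpace ℂ H]
    (M : Set (H →L[ℂ] H)) : Prop where
  zero_mem : (0 : H →L[ℂ] H) ∈ M
  add_mem : ∀ {A B : H →L[ℂ] H}, A ∈ M → B ∈ M → A + B ∈ M
  smul_mem : ∀ (c : ℂ) {A : H →L[ℂ] H}, A ∈ M → c • A ∈ M
  mul_mem : ∀ {A B : H →L[ℂ] H}, A ∈ M → B ∈ M → A.comp B ∈ M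
  isClosed : IsClosed M
  nondegenerate : Dense (↑(Submodule.span ℂ {u : H | ∃ A ∈ M, ∃ v : H, u = A v}) : Set H)
  approx_unit : ∃ C : ℝ, ∀ ε > (0 : ℝ), ∀ F : Finset (H →L[ℂ] H), ↑F ⊆ M →
    ∃ J ∈ M, ‖J‖ ≤ C ∧ ∀ A ∈ F, ‖J.comp A - A‖ ≤ ε ∧ ‖A.comp J - A‖ ≤ ε

/-- A Hilbert module: a Banach module on a Hilbert space whose multiplier algebra is a
C*-algebra of operators (i.e. is moreover closed under adjoints). -/
structure IsHilbertModule (H : Type*) [NormedAddCommGroup H] [InnerProductSpace ℂ H]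
    [CompleteSpace H] (M : Set (H →L[ℂ] H)) extends IsBanachModule H M : Prop where
  star_mem : ∀ {A : H →L[ℂ] H}, A ∈ M → ContinuousLinearMap.adjoint A ∈ M

/-- `B₀ˡ(H,K)`: the closed linear span of the operators `A ∘ T` with `A` in the multiplier
algebra of `K` and `T ∈ B(H,K)` (operators left vanishing at infinity). -/
def B0l [NormedAddCommGroup H] [NormedSpace ℂ H] [NormedAddCommGroup K] [NormedSpace ℂ K]
    (MK : Set (K →L[ℂ] K)) : Set (H →L[ℂ] K) :=
  closure (↑(Submodule.span ℂ
    {S : H →L[ℂ] K | ∃ A ∈ MK, ∃ T : H →L[ℂ] K, S = A.comp T}) : Set (H →L[ℂ] K))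

/-- `B₀ʳ(H,K)`: the closed linear span of the operators `T ∘ A` with `A` in the multiplier
algebra of `H` and `T ∈ B(H,K)` (operators right vanishing at infinity). -/
def B0r [NormedAddCommGroup H] [NormedSpace ℂ H] [NormedAddCommGroup K] [NormedSpace ℂ K]
    (MH : Set (H →L[ℂ] H)) : Set (H →L[ℂ] K) :=
  closure (↑(Submodule.span ℂ
    {S : H →L[ℂ] K | ∃ A ∈ MH, ∃ T : H →L[ℂ] K, S = T.comp A}) : Set (H →L[ℂ] K))

/-- `S ∈ B(H,K)` is left decay preserving. -/
def LeftDecayPreserving [NormedAddCommGroup H] [NormedSpace ℂ H] [NormedAddCommGroup K]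
    [NormedSpace ℂ K] (MH : Set (H →L[ℂ] H)) (MK : Set (K →L[ℂ] K))
    (S : H →L[ℂ] K) : Prop :=
  ∀ A ∈ MH, S.comp A ∈ B0l MK

/-- `S ∈ B(H,K)` is right decay preserving. -/
def RightDecayPreserving [NormedAddCommGroup H] [NormedSpace ℂ H] [NormedAddCommGroup K]
    [NormedSpace ℂ K] (MH : Set (H →L[ℂ] H)) (MK : Set (K →L[ℂ] K))
    (S : H →L[ℂ] K) : Prop :=
  ∀ A ∈ MK, A.comp S ∈ B0r MH

/-- `R` is the resolvent of the (unbounded) operator `A` at `z`. -/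
def IsResolventAt {H : Type*} [NormedAddCommGroup H] [NormedSpace ℂ H]
    (A : H →ₗ.[ℂ] H) (z : ℂ) (R : H →L[ℂ] H) : Prop :=
  (∀ v : H, ∃ h : R v ∈ A.domain, A ⟨R v, h⟩ - z • R v = v) ∧
  (∀ x : A.domain, R (A x - z • (x : H)) = (x : H))


-- ### Auxiliary lemmas ###

local notation "⟪" x ", " y "⟫" => @inner ℂ _ _ x y

theorem toAntiDual_apply' {G H : Type*} [NormedAddCommGroup G] [NormedSpace ℂ G]
    [NormedAddCommGroup H] [InnerProductSpace ℂ H] (e : G →L[ℂ] H) (v : H) (u : G) :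
    toAntiDual e v u = ⟪e u, v⟫ := rfl

/-- Riesz representation for the antidual of a Hilbert space. -/
theorem toAntiDual_id_surjective {G : Type*} [NormedAddCommGroup G] [InnerProductSpace ℂ G]
    [CompleteSpace G] :
    Function.Surjective ⇑(toAntiDual (ContinuousLinearMap.id ℂ G)) := by
  intro Φ
  let ψ : G →L[ℂ] ℂ := LinearMap.mkContinuous
    { toFun := fun u => starRingEnd ℂ (Φ u)
      map_add' := fun u v => by simp
      map_smul' := fun c u => by simp }
    ‖Φ‖ (fun u => by
      simp only [LinearMap.coe_mk, AddHom.coe_mk]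
      calc ‖starRingEnd ℂ (Φ u)‖ = ‖Φ u‖ := by simp
        _ ≤ ‖Φ‖ * ‖u‖ := Φ.le_opNorm u)
  refine ⟨(InnerProductSpace.toDual ℂ G).symm ψ, ?_⟩
  ext u
  show ⟪u, (InnerProductSpace.toDual ℂ G).symm ψ⟫ = Φ u
  rw [← inner_conj_symm, InnerProductSpace.toDual_symm_apply]
  show starRingEnd ℂ (starRingEnd ℂ (Φ u)) = Φ u
  simp

theorem B0l_comp_right {X Y K : Type*} [NormedAddCommGroup X] [NormedSpace ℂ X]
    [NormedAddCommGroup Y] [NormedSpace ℂ Y] [NormedAddCommGroup K] [NormedSpace ℂ K]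
    (MK : Set (K →L[ℂ] K)) {S : X →L[ℂ] K} (hS : S ∈ B0l (H := X) MK) (W : Y →L[ℂ] X) :
    S.comp W ∈ B0l (H := Y) MK := by
  classical
  set genX : Set (X →L[ℂ] K) := {S : X →L[ℂ] K | ∃ A ∈ MK, ∃ T : X →L[ℂ] K, S = A.comp T}
  set genY : Set (Y →L[ℂ] K) := {S : Y →L[ℂ] K | ∃ A ∈ MK, ∃ T : Y →L[ℂ] K, S = A.comp T}
  let L : (X →L[ℂ] K) →L[ℂ] (Y →L[ℂ] K) :=
    (ContinuousLinearMap.compSL Y X K (RingHom.id ℂ) (RingHom.id ℂ)).flip W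
  have hL : ∀ S : X →L[ℂ] K, L S = S.comp W := fun _ => rfl
  have h1 : L S ∈ L '' closure (↑(Submodule.span ℂ genX)) := ⟨S, hS, rfl⟩
  have h2 : L '' closure (↑(Submodule.span ℂ genX)) ⊆
      closure (L '' ↑(Submodule.span ℂ genX)) :=
    image_closure_subset_closure_image L.continuous
  have h3 : L '' ↑(Submodule.span ℂ genX) = ↑(Submodule.map (L : (X →L[ℂ] K) →ₗ[ℂ] (Y →L[ℂ] K)) (Submodule.span ℂ genX)) := rfl
  have h4 : Submodule.map (L : (X →L[ℂ] K) →ₗ[ℂ] (Y →L[ℂ] K)) (Submodule.span ℂ genX)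
      = Submodule.span ℂ ((L : (X →L[ℂ] K) →ₗ[ℂ] (Y →L[ℂ] K)) '' genX) := Submodule.map_span _ _
  have h5 : Submodule.span ℂ ((L : (X →L[ℂ] K) →ₗ[ℂ] (Y →L[ℂ] K)) '' genX) ≤
      Submodule.span ℂ genY := by
    apply Submodule.span_mono
    rintro _ ⟨S', ⟨A, hA, T, rfl⟩, rfl⟩
    exact ⟨A, hA, T.comp W, by simpa [hL] using (ContinuousLinearMap.comp_assoc A T W)⟩
  rw [hL] at h1
  have h7 := h2 h1
  rw [h3] at h7
  have h6 : (↑(Submodule.map (L : (X →L[ℂ] K) →ₗ[ℂ] (Y →L[ℂ] K)) (Submodule.span ℂ genX)) :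
      Set (Y →L[ℂ] K)) ⊆ ↑(Submodule.span ℂ genY) := by
    rw [h4]; exact h5
  exact closure_mono h6 h7

theorem B0l_decay_comp {X K H' : Type*} [NormedAddCommGroup X] [NormedSpace ℂ X]
    [NormedAddCommGroup K] [NormedSpace ℂ K] [NormedAddCommGroup H'] [NormedSpace ℂ H']
    (MK : Set (K →L[ℂ] K)) (MH : Set (H' →L[ℂ] H'))
    (R : K →L[ℂ] H') (hdp : ∀ M ∈ MK, R.comp M ∈ B0l (H := K) MH)
    {T : X →L[ℂ] K} (hT : T ∈ B0l (H := X) MK) :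
    R.comp T ∈ B0l (H := X) MH := by
  classical
  set genK : Set (X →L[ℂ] K) := {S : X →L[ℂ] K | ∃ A ∈ MK, ∃ T' : X →L[ℂ] K, S = A.comp T'}
  set genH : Set (X →L[ℂ] H') := {S : X →L[ℂ] H' | ∃ A ∈ MH, ∃ T' : X →L[ℂ] H', S = A.comp T'}
  let L : (X →L[ℂ] K) →L[ℂ] (X →L[ℂ] H') :=
    ContinuousLinearMap.compSL X K H' (RingHom.id ℂ) (RingHom.id ℂ) R
  have hL : ∀ S : X →L[ℂ] K, L S = R.comp S := fun _ => rfl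
  set N : Submodule ℂ (X →L[ℂ] H') := (Submodule.span ℂ genH).topologicalClosure
  have hNset : (↑N : Set (X →L[ℂ] H')) = B0l (H := X) MH := rfl
  have h1 : L T ∈ L '' closure (↑(Submodule.span ℂ genK)) := ⟨T, hT, rfl⟩
  have h2 := image_closure_subset_closure_image
    (s := (↑(Submodule.span ℂ genK) : Set (X →L[ℂ] K))) L.continuous h1
  have h3 : L '' ↑(Submodule.span ℂ genK) ⊆ (↑N : Set (X →L[ℂ] H')) := by
    have h4 : Submodule.map (L : (X →L[ℂ] K) →ₗ[ℂ] (X →L[ℂ] H')) (Submodule.span ℂ genK)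
        = Submodule.span ℂ ((L : (X →L[ℂ] K) →ₗ[ℂ] (X →L[ℂ] H')) '' genK) :=
      Submodule.map_span _ _
    have h5 : Submodule.span ℂ ((L : (X →L[ℂ] K) →ₗ[ℂ] (X →L[ℂ] H')) '' genK) ≤ N := by
      rw [Submodule.span_le]
      rintro _ ⟨S', ⟨A, hA, T', rfl⟩, rfl⟩
      show (L : (X →L[ℂ] K) →ₗ[ℂ] (X →L[ℂ] H')) (A.comp T') ∈ (↑N : Set (X →L[ℂ] H'))
      rw [hNset]
      have := B0l_comp_right (X := K) (Y := X) MH (hdp A hA) T'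
      simpa [hL, ContinuousLinearMap.comp_assoc] using this
    intro x hx
    have hx' : x ∈ Submodule.map (L : (X →L[ℂ] K) →ₗ[ℂ] (X →L[ℂ] H')) (Submodule.span ℂ genK) := hx
    rw [h4] at hx'
    exact h5 hx'
  have h6 : closure (L '' ↑(Submodule.span ℂ genK)) ⊆ (↑N : Set (X →L[ℂ] H')) := by
    have hcl : IsClosed (↑N : Set (X →L[ℂ] H')) :=
      (Submodule.span ℂ genH).isClosed_topologicalClosure
    rw [← hcl.closure_eq]
    exact closure_mono h3
  rw [hL] at h2
  exact h6 h2

theorem B0l_approx {X K : Type*} [NormedAddCommGroup X] [NormedSpace ℂ X]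
    [NormedAddCommGroup K] [NormedSpace ℂ K]
    (MK : Set (K →L[ℂ] K)) (hMK : IsBanachModule K MK)
    {Φ : X →L[ℂ] K} (hΦ : Φ ∈ B0l (H := X) MK) :
    ∀ ε > (0 : ℝ), ∃ J ∈ MK, ‖J.comp Φ - Φ‖ ≤ ε := by
  classical
  obtain ⟨C, hC⟩ := hMK.approx_unit
  have hC0 : 0 ≤ C := by
    obtain ⟨J, _, hJC, _⟩ := hC 1 one_pos ∅ (by simp)
    exact le_trans (norm_nonneg J) hJC
  intro ε hε
  set δ : ℝ := ε / (2 * (C + 1)) with hδdef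
  have hδ : 0 < δ := by positivity
  rw [B0l, Metric.mem_closure_iff] at hΦ
  obtain ⟨s, hs, hdist⟩ := hΦ δ hδ
  rw [dist_eq_norm] at hdist
  rw [SetLike.mem_coe, Submodule.mem_span_set'] at hs
  obtain ⟨n, c, g, hsum⟩ := hs
  have hgen : ∀ i : Fin n, ∃ A, A ∈ MK ∧ ∃ T : X →L[ℂ] K, (g i : X →L[ℂ] K) = A.comp T := by
    intro i
    obtain ⟨A, hA, T, h⟩ := (g i).2
    exact ⟨A, hA, T, h⟩
  choose N hN T hT using hgen
  set B : ℝ := (∑ i : Fin n, ‖c i‖ * ‖T i‖) + 1 with hBdef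
  have hB : 0 < B := by positivity
  set ε' : ℝ := (ε / 2) / B with hε'def
  have hε' : 0 < ε' := by positivity
  obtain ⟨J, hJmem, hJnorm, hJ⟩ := hC ε' hε' (Finset.image N Finset.univ) (by
    intro x hx
    simp only [Finset.coe_image, Set.mem_image] at hx
    obtain ⟨i, _, rfl⟩ := hx
    exact hN i)
  refine ⟨J, hJmem, ?_⟩
  have hsrep : s = ∑ i : Fin n, c i • ((N i).comp (T i)) := by
    rw [← hsum]; congr 1; ext i; rw [hT i]
  have hJs : ‖J.comp s - s‖ ≤ ε / 2 := by
    have hrep : J.comp s - s = ∑ i : Fin n, c i • (((J.comp (N i)) - N i).comp (T i)) := by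
      rw [hsrep, ContinuousLinearMap.comp_finset_sum, ← Finset.sum_sub_distrib]
      apply Finset.sum_congr rfl
      intro i _
      rw [ContinuousLinearMap.comp_smulₛₗ, RingHom.id_apply, ← smul_sub,
        ContinuousLinearMap.sub_comp, ← ContinuousLinearMap.comp_assoc]
    rw [hrep]
    calc ‖∑ i : Fin n, c i • (((J.comp (N i)) - N i).comp (T i))‖
        ≤ ∑ i : Fin n, ‖c i • (((J.comp (N i)) - N i).comp (T i))‖ := norm_sum_le _ _
      _ ≤ ∑ i : Fin n, ‖c i‖ * (ε' * ‖T i‖) := by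
          apply Finset.sum_le_sum
          intro i _
          refine le_trans (ContinuousLinearMap.opNorm_smul_le _ _) ?_
          gcongr
          calc ‖((J.comp (N i)) - N i).comp (T i)‖
              ≤ ‖(J.comp (N i)) - N i‖ * ‖T i‖ := ContinuousLinearMap.opNorm_comp_le _ _
            _ ≤ ε' * ‖T i‖ := by
                gcongr
                exact (hJ (N i) (Finset.mem_image_of_mem N (Finset.mem_univ i))).1
      _ = ε' * ∑ i : Fin n, ‖c i‖ * ‖T i‖ := by rw [Finset.mul_sum]; congr 1; ext i; ring
      _ ≤ ε' * B := by
          apply mul_le_mul_of_nonneg_left _ (le_of_lt hε')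
          rw [hBdef]; linarith
      _ = ε / 2 := by rw [hε'def]; field_simp
  have hmain : J.comp Φ - Φ = J.comp (Φ - s) + (J.comp s - s) + (s - Φ) := by
    rw [ContinuousLinearMap.comp_sub]; abel
  rw [hmain]
  have h1 : ‖J.comp (Φ - s)‖ ≤ C * δ := by
    calc ‖J.comp (Φ - s)‖ ≤ ‖J‖ * ‖Φ - s‖ := ContinuousLinearMap.opNorm_comp_le _ _
      _ ≤ C * δ := mul_le_mul hJnorm (le_of_lt hdist) (norm_nonneg _) hC0
  have h2 : ‖s - Φ‖ ≤ δ := by rw [norm_sub_rev]; exact le_of_lt hdist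
  calc ‖J.comp (Φ - s) + (J.comp s - s) + (s - Φ)‖
      ≤ ‖J.comp (Φ - s) + (J.comp s - s)‖ + ‖s - Φ‖ := norm_add_le _ _
    _ ≤ ‖J.comp (Φ - s)‖ + ‖J.comp s - s‖ + ‖s - Φ‖ := by
        gcongr; exact norm_add_le _ _
    _ ≤ C * δ + ε / 2 + δ := by gcongr
    _ ≤ ε := by
        have hcd : C * δ + δ = ε / 2 := by
          rw [hδdef]; field_simp
        linarith

theorem compact_of_mem_B0l {G H : Type*} [NormedAddCommGroup G] [NormedSpace ℂ G]
    [NormedAddCommGroup H] [NormedSpace ℂ H] [CompleteSpace H]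
    (MH : Set (H →L[ℂ] H)) (hMH : IsBanachModule H MH)
    (e : G →L[ℂ] H) (hcpt : ∀ A ∈ MH, IsCompactOperator (⇑(A.comp e)))
    {Φ : H →L[ℂ] H} (hΦ : Φ ∈ B0l (H := H) MH) (D : H →L[ℂ] G) (hD : Φ = e.comp D) :
    IsCompactOperator ⇑Φ := by
  have hseq : ∀ n : ℕ, ∃ J ∈ MH, ‖J.comp Φ - Φ‖ ≤ 1 / (n + 1) := fun n =>
    B0l_approx MH hMH hΦ (1 / (n + 1)) (by positivity)
  choose Jf hJmem hJle using hseq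
  have htend : Filter.Tendsto (fun n => (Jf n).comp Φ) Filter.atTop (nhds Φ) := by
    rw [tendsto_iff_norm_sub_tendsto_zero]
    apply squeeze_zero (fun n => norm_nonneg _) hJle
    exact tendsto_one_div_add_atTop_nhds_zero_nat
  apply isCompactOperator_of_tendsto htend
  apply Filter.Eventually.of_forall
  intro n
  have h1 : IsCompactOperator ⇑((Jf n).comp e) := hcpt _ (hJmem n)
  have h2 : IsCompactOperator (⇑((Jf n).comp e) ∘ ⇑D) := h1.comp_clm D
  have h3 : (Jf n).comp Φ = ((Jf n).comp e).comp D := by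
    rw [hD, ContinuousLinearMap.comp_assoc]
  rw [h3]
  exact h2

/-- Lift a bounded operator on `H` taking values in `e '' G` through the embedding `e`,
using the closed graph theorem. -/
theorem exists_lift {G H : Type*} [NormedAddCommGroup G] [NormedSpace ℂ G] [CompleteSpace G]
    [NormedAddCommGroup H] [NormedSpace ℂ H] [CompleteSpace H]
    (e : G →L[ℂ] H) (he : Function.Injective ⇑e) (f : H →L[ℂ] H)
    (hf : ∀ v : H, ∃ u : G, e u = f v) : ∃ P : H →L[ℂ] G, ∀ v, e (P v) = f v := by
  choose Pf hPf using hf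
  have hadd : ∀ x y, Pf (x + y) = Pf x + Pf y := fun x y =>
    he (by rw [hPf, map_add, map_add, hPf, hPf])
  have hsmul : ∀ (c : ℂ) (x), Pf (c • x) = c • Pf x := fun c x =>
    he (by rw [hPf, map_smul, map_smul, hPf])
  let Plin : H →ₗ[ℂ] G :=
    { toFun := Pf
      map_add' := hadd
      map_smul' := hsmul }
  have hg : ∀ (u : ℕ → H) (x y), Filter.Tendsto u Filter.atTop (nhds x) →
      Filter.Tendsto (⇑Plin ∘ u) Filter.atTop (nhds y) → y = Plin x := by
    intro u x y hux huy
    have h1 : Filter.Tendsto (⇑e ∘ (⇑Plin ∘ u)) Filter.atTop (nhds (e y)) :=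
      (e.continuous.tendsto y).comp huy
    have h2 : ⇑e ∘ (⇑Plin ∘ u) = ⇑f ∘ u := funext fun n => hPf (u n)
    rw [h2] at h1
    have h3 : Filter.Tendsto (⇑f ∘ u) Filter.atTop (nhds (f x)) :=
      (f.continuous.tendsto x).comp hux
    have h4 : e y = f x := tendsto_nhds_unique h1 h3
    exact he (h4.trans (hPf x).symm)
  exact ⟨ContinuousLinearMap.ofSeqClosedGraph hg, fun v => hPf v⟩

/-- Abstract compactness criterion in a compact Friedrichs module. -/
theorem stmt4 {G H : Type*} [NormedAddCommGroup G] [InnerProductSpace ℂ G] [CompleteSpace G]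
    [NormedAddCommGroup H] [InnerProductSpace ℂ H] [CompleteSpace H]
    -- `(G, H)` is a compact Friedrichs module:
    (MH : Set (H →L[ℂ] H)) (hMH : IsHilbertModule H MH)
    (e : G →L[ℂ] H) (he : Function.Injective ⇑e) (hd : DenseRange ⇑e)
    (hcpt : ∀ A ∈ MH, IsCompactOperator (⇑(A.comp e)))
    -- `A`, `B` are closed densely defined operators in `H` satisfying assumption (AB):
    (A B : H →ₗ.[ℂ] H)
    (hAcl : A.IsClosed) (hAdense : Dense (A.domain : Set H))
    (hBcl : B.IsClosed) (hBdense : Dense (B.domain : Set H))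
    (hAsubG : ∀ v ∈ A.domain, ∃ u : G, e u = v)
    (hAdenseG : Dense {u : G | e u ∈ A.domain})
    (hAstarsubG : ∀ v ∈ A.adjoint.domain, ∃ u : G, e u = v)
    (hBsubG : ∀ v ∈ B.domain, ∃ u : G, e u = v)
    -- the continuous extensions `Ã, B̃ ∈ B(G, G*)`:
    (Atil Btil : G →L[ℂ] AntiDual G)
    (hAtil : ∀ (u : G) (hv : e u ∈ A.domain), Atil u = toAntiDual e (A ⟨e u, hv⟩))
    (hBtil : ∀ (u : G) (hv : e u ∈ B.domain), Btil u = toAntiDual e (B ⟨e u, hv⟩))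
    -- `z ∈ ρ(A) ∩ ρ(B)`, with resolvents `RA`, `RB`:
    (z : ℂ) (RA RB : H →L[ℂ] H)
    (hRA : IsResolventAt A z RA) (hRB : IsResolventAt B z RB)
    -- `Rz : G* → H` is the unique continuous extension of `(A − z)⁻¹`:
    (Rz : AntiDual G →L[ℂ] H) (hRz : ∀ v : H, Rz (toAntiDual e v) = RA v)
    -- a Banach module `K` and a factorization `B̃ − Ã = S ∘ T`:
    {K : Type*} [NormedAddCommGroup K] [NormedSpace ℂ K] [CompleteSpace K]
    (MK : Set (K →L[ℂ] K)) (hMK : IsBanachModule K MK)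
    (Sop : K →L[ℂ] AntiDual G) (Top : G →L[ℂ] K)
    (hTop : Top ∈ B0l (H := G) MK)
    (hfact : Btil - Atil = Sop.comp Top)
    -- `(A − z)⁻¹ S ∈ B(K, H)` is left decay preserving:
    (hdp : LeftDecayPreserving MK MH (Rz.comp Sop)) :
    IsCompactOperator (⇑(RA - RB)) := by
  classical
  have hBM : IsBanachModule H MH := hMH.toIsBanachModule
  set RAadj := ContinuousLinearMap.adjoint RA with hRAadj_def
  set eadj := ContinuousLinearMap.adjoint e with headj_def
  -- Step 1: the resolvent of the adjoint
  have hkey : ∀ (w : H) (x : A.domain),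
      ⟪(w + (starRingEnd ℂ z) • RAadj w : H), (x : H)⟫ = ⟪RAadj w, A x⟫ := by
    intro w x
    have h1 : RA (A x - z • (x : H)) = (x : H) := hRA.2 x
    have h2 : ⟪RAadj w, A x - z • (x : H)⟫ = ⟪w, (x : H)⟫ := by
      rw [hRAadj_def, ContinuousLinearMap.adjoint_inner_left, h1]
    have h3 : A x = (A x - z • (x : H)) + z • (x : H) := by abel
    rw [h3, inner_add_right, h2, inner_add_left, inner_smul_left, inner_smul_right]
    simp
  have hmemadj : ∀ w : H, RAadj w ∈ A.adjoint.domain := fun w =>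
    LinearPMap.mem_adjoint_domain_of_exists _
      ⟨w + (starRingEnd ℂ z) • RAadj w, fun x => hkey w x⟩
  have hvaladj : ∀ w : H, A.adjoint ⟨RAadj w, hmemadj w⟩
      = w + (starRingEnd ℂ z) • RAadj w := fun w =>
    LinearPMap.adjoint_apply_eq hAdense _ (fun x => hkey w x)
  -- Step 2: the three lifts P, Q, P'
  obtain ⟨P, hPf⟩ := exists_lift e he RA (fun v => hAsubG _ (hRA.1 v).choose)
  obtain ⟨Q, hQf⟩ := exists_lift e he RB (fun v => hBsubG _ (hRB.1 v).choose)
  obtain ⟨P', hP'f⟩ := exists_lift e he RAadj (fun w => hAstarsubG _ (hmemadj w))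
  -- Step 3: identification of Atil against the adjoint
  have hstarid : ∀ (u' : G) (h : e u' ∈ A.adjoint.domain) (g : G),
      Atil g u' = ⟪A.adjoint ⟨e u', h⟩, e g⟫ := by
    intro u' h
    have hf1 : Continuous fun g : G => Atil g u' :=
      (continuous_eval_const u').comp Atil.continuous
    have hf2 : Continuous fun g : G => (⟪A.adjoint ⟨e u', h⟩, e g⟫ : ℂ) :=
      Continuous.inner continuous_const e.continuous
    have heq : Set.EqOn (fun g : G => Atil g u')
        (fun g : G => (⟪A.adjoint ⟨e u', h⟩, e g⟫ : ℂ)) {u : G | e u ∈ A.domain} := by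
      intro g hg
      have h2 : Atil g u' = ⟪e u', A ⟨e g, hg⟩⟫ := by
        rw [hAtil g hg]; rfl
      have h3 := (LinearPMap.adjoint_isFormalAdjoint hAdense) ⟨e u', h⟩ ⟨e g, hg⟩
      show Atil g u' = ⟪A.adjoint ⟨e u', h⟩, e g⟫
      rw [h2]
      exact h3.symm
    have hext := Continuous.ext_on hAdenseG hf1 hf2 heq
    intro g
    exact congrFun hext g
  -- Step 4: density of the range of `toAntiDual e`
  have hfact2 : ⇑(toAntiDual e) = ⇑(toAntiDual (ContinuousLinearMap.id ℂ G)) ∘ ⇑eadj := by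
    funext v; ext u
    show (⟪e u, v⟫ : ℂ) = ⟪u, eadj v⟫
    rw [headj_def, ContinuousLinearMap.adjoint_inner_right]
  have headjdr : DenseRange ⇑eadj := by
    have hbot : (LinearMap.range (eadj : H →ₗ[ℂ] G))ᗮ = ⊥ := by
      rw [Submodule.eq_bot_iff]
      intro x hx
      rw [Submodule.mem_orthogonal] at hx
      have h0 : ∀ v : H, (⟪eadj v, x⟫ : ℂ) = 0 := fun v =>
        hx (eadj v) (LinearMap.mem_range_self _ v)
      have h1 : e x = 0 := by
        apply ext_inner_left ℂ
        intro v
        rw [inner_zero_right, headj_def] at *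
        rw [← ContinuousLinearMap.adjoint_inner_left e x v]
        exact h0 v
      exact he (by rw [h1, map_zero])
    have h2 := Submodule.topologicalClosure_eq_top_iff.mpr hbot
    have h3 : Set.range ⇑eadj = ((LinearMap.range (eadj : H →ₗ[ℂ] G) : Submodule ℂ G) : Set G) := by
      ext u; simp [LinearMap.mem_range]
    rw [DenseRange, h3]
    exact Submodule.dense_iff_topologicalClosure_eq_top.mpr h2
  have hdr : DenseRange ⇑(toAntiDual e) := by
    rw [hfact2]
    exact (toAntiDual_id_surjective.denseRange).comp headjdr
      (toAntiDual (ContinuousLinearMap.id ℂ G)).continuous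
  -- Step 5: the action of Rz via P'
  have hRzC : ∀ (w : H) (Φ : AntiDual G), (⟪w, Rz Φ⟫ : ℂ) = Φ (P' w) := by
    intro w
    have hf1 : Continuous fun Φ : AntiDual G => (⟪w, Rz Φ⟫ : ℂ) :=
      Continuous.inner continuous_const Rz.continuous
    have hf2 : Continuous fun Φ : AntiDual G => Φ (P' w) := continuous_eval_const (P' w)
    have heq : Set.EqOn (fun Φ : AntiDual G => (⟪w, Rz Φ⟫ : ℂ))
        (fun Φ : AntiDual G => Φ (P' w)) (Set.range ⇑(toAntiDual e)) := by
      rintro _ ⟨v, rfl⟩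
      show (⟪w, Rz (toAntiDual e v)⟫ : ℂ) = toAntiDual e v (P' w)
      rw [hRz v, toAntiDual_apply', hP'f w]
      exact (ContinuousLinearMap.adjoint_inner_left RA v w).symm
    have hext := Continuous.ext_on hdr hf1 hf2 heq
    intro Φ
    exact congrFun hext Φ
  -- Step 6: the resolvent identity
  have hmain : ∀ v : H, ((Rz.comp Sop).comp (Top.comp Q)) v = (RA - RB) v := by
    intro v
    obtain ⟨hv', hBv⟩ := hRB.1 v
    have hQmem : e (Q v) ∈ B.domain := by rw [hQf v]; exact hv'
    apply ext_inner_left ℂ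
    intro w
    have hPmem : e (P' w) ∈ A.adjoint.domain := by rw [hP'f w]; exact hmemadj w
    have l1 : ((Rz.comp Sop).comp (Top.comp Q)) v = Rz (Sop (Top (Q v))) := rfl
    have l2 : Sop (Top (Q v)) = (Btil - Atil) (Q v) := by rw [hfact]; rfl
    rw [l1, l2, hRzC w _, ContinuousLinearMap.sub_apply, ContinuousLinearMap.sub_apply,
      hBtil (Q v) hQmem, hstarid (P' w) hPmem (Q v)]
    have b1 : B ⟨e (Q v), hQmem⟩ = B ⟨RB v, hv'⟩ := by
      congr 1
      exact Subtype.ext (hQf v)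
    have a1 : A.adjoint ⟨e (P' w), hPmem⟩ = A.adjoint ⟨RAadj w, hmemadj w⟩ := by
      congr 1
      exact Subtype.ext (hP'f w)
    rw [toAntiDual_apply', b1, a1, hvaladj w, hP'f w, hQf v]
    have hBv' : B ⟨RB v, hv'⟩ = v + z • RB v := sub_eq_iff_eq_add.mp hBv
    rw [hBv', ContinuousLinearMap.sub_apply, inner_sub_right, inner_add_right,
      inner_add_left, inner_smul_left, inner_smul_right]
    have hadj1 : (⟪RAadj w, v⟫ : ℂ) = ⟪w, RA v⟫ :=
      ContinuousLinearMap.adjoint_inner_left RA v w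
    rw [hadj1]
    simp only [RingHomCompTriple.comp_apply, starRingEnd_self_apply, RingHom.id_apply]
    ring
  have hΦeq : (RA - RB : H →L[ℂ] H) = (Rz.comp Sop).comp (Top.comp Q) :=
    (ContinuousLinearMap.ext fun v => hmain v).symm
  -- Step 7: membership in B0l and compactness
  have hB0 : (RA - RB : H →L[ℂ] H) ∈ B0l (H := H) MH := by
    rw [hΦeq]
    exact B0l_decay_comp MK MH (Rz.comp Sop) hdp (B0l_comp_right MK hTop Q)
  have hfac : (RA - RB : H →L[ℂ] H) = e.comp (P - Q) := by
    ext v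
    have : e (P v - Q v) = e (P v) - e (Q v) := map_sub e _ _
    simp [this, hPf v, hQf v]
  exact compact_of_mem_B0l MH hBM e hcpt hB0 (P - Q) hfac


end
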